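/- arXiv:2506.04927 — 3 statements merged into one kernel-verified Lean document; each statement's English description precedes it below -/
import Mathlib

section
/- Let θ : ℝ → ℝ be continuous, e : [0,T] → ℝ integrable with ē = 0, ε > 0 and λ ∈ (0,1]. Then every solution u of the periodic problem (φ_{p(t)}(u'(t)))' + λθ(u(t))u'(t) − λε u(t) = λ e(t) on [0,T], u(0) − u(T) = 0 = u'(0) − u'(T), satisfies: (i) ū = 0; (ii) ‖u'‖_{L^{p_-}} ≤ R₁, where R₁ is the unique positive root of the equation x^{p_-} − ‖e‖_{L¹} T^{(p_- − 1)/p_-} x − T = 0; and (iii) ‖u‖_∞ ≤ T^{(p_- − 1)/p_-} R₁. -/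
open Set MeasureTheory

/-- `φ_q(x) = |x|^{q-2} x` (with `φ_q(0) = 0`, automatic since `0 ^ y * 0 = 0`). -/
noncomputable def phi (q x : ℝ) : ℝ := |x| ^ (q - 2) * x

/-- sup-norm of `v` on `[0,T]`. -/
noncomputable def supNorm (T : ℝ) (v : ℝ → ℝ) : ℝ := sSup ((fun t => |v t|) '' Set.Icc 0 T)

/-- mean value `v̄ = (1/T) ∫₀ᵀ v`. -/
noncomputable def meanVal (T : ℝ) (v : ℝ → ℝ) : ℝ := (1 / T) * ∫ t in (0:ℝ)..T, v t

/-- `v` (with derivative `v'`) is C¹ on `[0,T]`. -/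
def IsC1On (T : ℝ) (v v' : ℝ → ℝ) : Prop :=
  (∀ t ∈ Set.Icc 0 T, HasDerivWithinAt v (v' t) (Set.Icc 0 T) t) ∧
    ContinuousOn v' (Set.Icc 0 T)

/-- solution of the periodic problem `(φ_{p(t)}(u'))' = F(t)` a.e. on `[0,T]`:
`u` is C¹, satisfies the periodic boundary conditions, and
`w(t) = φ_{p(t)}(u'(t))` is absolutely continuous with a.e. derivative the integrable `F`. -/
def IsAESol (T : ℝ) (p F u u' : ℝ → ℝ) : Prop :=
  IsC1On T u u' ∧ u 0 = u T ∧ u' 0 = u' T ∧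
    MeasureTheory.IntegrableOn F (Set.Icc 0 T) ∧
    ∀ t ∈ Set.Icc 0 T,
      phi (p t) (u' t) = phi (p 0) (u' 0) + ∫ s in (0:ℝ)..t, F s

lemma phi_mul_self {q x : ℝ} (hq : 0 < q) : x * phi q x = |x| ^ q := by
  rcases eq_or_ne x 0 with rfl | hx
  · simp [phi, Real.zero_rpow hq.ne']
  · have hax : 0 < |x| := abs_pos.2 hx
    have h2 : x * x = |x| ^ (2:ℝ) := by
      rw [show (2:ℝ) = ((2:ℕ):ℝ) by norm_num, Real.rpow_natCast]
      rw [pow_two, ← abs_mul_abs_self]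
    calc x * (|x| ^ (q-2) * x) = |x| ^ (q-2) * (x * x) := by ring
    _ = |x| ^ (q-2) * |x| ^ (2:ℝ) := by rw [h2]
    _ = |x| ^ q := by rw [← Real.rpow_add hax]; ring_nf

lemma fubini_triangle {T : ℝ} (hT : 0 < T) {f g : ℝ → ℝ}
    (hf : MeasureTheory.IntegrableOn f (Set.Icc 0 T))
    (hg : MeasureTheory.IntegrableOn g (Set.Icc 0 T)) :
    ∫ t in Set.Ioc (0:ℝ) T, f t * (∫ s in Set.Ioc (0:ℝ) t, g s) =
      ∫ s in Set.Ioc (0:ℝ) T, g s * (∫ t in Set.Icc s T, f t) := by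
  set μ := volume.restrict (Set.Ioc (0:ℝ) T) with hμ
  have hfμ : Integrable f μ := hf.mono_set Ioc_subset_Icc_self
  have hgμ : Integrable g μ := hg.mono_set Ioc_subset_Icc_self
  have hmeas : MeasurableSet {z : ℝ × ℝ | z.2 ≤ z.1} :=
    (isClosed_le continuous_snd continuous_fst).measurableSet
  have hH : Integrable (fun z : ℝ × ℝ => if z.2 ≤ z.1 then f z.1 * g z.2 else 0) (μ.prod μ) := by
    have h1 : Integrable (fun z : ℝ × ℝ => f z.1 * g z.2) (μ.prod μ) := hfμ.mul_prod hgμ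
    have := h1.indicator hmeas
    refine this.congr ?_
    filter_upwards with z
    simp [Set.indicator_apply]
  have hswap := MeasureTheory.integral_integral_swap
    (f := fun t s => if s ≤ t then f t * g s else 0) (μ := μ) (ν := μ) hH
  calc ∫ t in Set.Ioc (0:ℝ) T, f t * (∫ s in Set.Ioc (0:ℝ) t, g s)
      = ∫ t, (∫ s, (if s ≤ t then f t * g s else 0) ∂μ) ∂μ := by
        refine setIntegral_congr_ae measurableSet_Ioc ?_
        filter_upwards with t ht
        have h1 : (fun s => if s ≤ t then f t * g s else 0)
            = Set.indicator (Set.Iic t) (fun s => f t * g s) := by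
          funext s; simp [Set.indicator_apply]
        rw [h1, integral_indicator measurableSet_Iic, hμ,
          Measure.restrict_restrict measurableSet_Iic]
        have h2 : Set.Iic t ∩ Set.Ioc 0 T = Set.Ioc 0 t := by
          ext x
          simp only [mem_inter_iff, mem_Iic, mem_Ioc]
          constructor
          · rintro ⟨h1, h2, h3⟩; exact ⟨h2, h1⟩
          · rintro ⟨h1, h2⟩; exact ⟨h2, h1, h2.trans ht.2⟩
        rw [h2, MeasureTheory.integral_const_mul]
  _ = ∫ s, (∫ t, (if s ≤ t then f t * g s else 0) ∂μ) ∂μ := hswap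
  _ = ∫ s in Set.Ioc (0:ℝ) T, g s * (∫ t in Set.Icc s T, f t) := by
        refine setIntegral_congr_ae measurableSet_Ioc ?_
        filter_upwards with s hs
        have h1 : (fun t => if s ≤ t then f t * g s else 0)
            = Set.indicator (Set.Ici s) (fun t => f t * g s) := by
          funext t; simp [Set.indicator_apply]
        rw [h1, integral_indicator measurableSet_Ici, hμ,
          Measure.restrict_restrict measurableSet_Ici]
        have h2 : Set.Ici s ∩ Set.Ioc 0 T = Set.Icc s T := by
          ext x
          simp only [mem_inter_iff, mem_Ici, mem_Ioc, mem_Icc]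
          constructor
          · rintro ⟨h1, h2, h3⟩; exact ⟨h1, h3⟩
          · rintro ⟨h1, h2⟩; exact ⟨h1, hs.1.trans_le h1, h2⟩
        rw [h2]
        rw [show (fun t => f t * g s) = fun t => g s * f t by funext t; ring]
        rw [MeasureTheory.integral_const_mul]

set_option maxHeartbeats 1000000

theorem stmt1 (T : ℝ) (hT : 0 < T) (p : ℝ → ℝ)
    (hp : ContinuousOn p (Set.Icc 0 T)) (hp1 : ∀ t ∈ Set.Icc 0 T, 1 < p t)
    (hpT : p 0 = p T)
    (pm : ℝ) (hpm : pm = sInf (p '' Set.Icc 0 T))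
    (θ : ℝ → ℝ) (hθ : Continuous θ)
    (e : ℝ → ℝ) (he : MeasureTheory.IntegrableOn e (Set.Icc 0 T))
    (hemean : meanVal T e = 0)
    (ε lam : ℝ) (hε : 0 < ε) (hlam0 : 0 < lam) (hlam1 : lam ≤ 1)
    (R₁ : ℝ) (hR₁pos : 0 < R₁)
    (hR₁root : R₁ ^ pm - (∫ t in (0:ℝ)..T, |e t|) * T ^ ((pm - 1) / pm) * R₁ - T = 0)
    (u u' : ℝ → ℝ)
    (hu : IsAESol T p (fun t => lam * (e t - θ (u t) * u' t + ε * u t)) u u') :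
    meanVal T u = 0 ∧
      (∫ t in (0:ℝ)..T, |u' t| ^ pm) ^ (1 / pm) ≤ R₁ ∧
      supNorm T u ≤ T ^ ((pm - 1) / pm) * R₁ := by
  obtain ⟨⟨hderiv, hu'c⟩, hu0T, hu'0T, hFint, hsol⟩ := hu
  set F : ℝ → ℝ := fun t => lam * (e t - θ (u t) * u' t + ε * u t) with hFdef
  have hT0 : (0:ℝ) ≤ T := hT.le
  have h0I : (0:ℝ) ∈ Set.Icc (0:ℝ) T := ⟨le_refl _, hT0⟩
  have hTI : T ∈ Set.Icc (0:ℝ) T := ⟨hT0, le_refl _⟩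
  have huc : ContinuousOn u (Set.Icc 0 T) := fun t ht => (hderiv t ht).continuousWithinAt
  -- pm facts
  obtain ⟨t₁, ht₁I, hpmeq, hple⟩ :=
    isCompact_Icc.exists_sInf_image_eq_and_le (⟨0, h0I⟩ : (Set.Icc (0:ℝ) T).Nonempty) hp
  have hpm1 : 1 < pm := by rw [hpm, hpmeq]; exact hp1 t₁ ht₁I
  have hpm0 : 0 < pm := lt_trans one_pos hpm1
  have hpmle : ∀ t ∈ Set.Icc (0:ℝ) T, pm ≤ p t := fun t ht => by
    rw [hpm, hpmeq]; exact hple t ht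
  -- integrability helpers
  have hsub : ∀ a ∈ Set.Icc (0:ℝ) T, ∀ b ∈ Set.Icc (0:ℝ) T, Set.uIcc a b ⊆ Set.Icc 0 T := by
    intro a ha b hb
    have ha' : a ∈ uIcc 0 T := by rwa [uIcc_of_le hT0]
    have hb' : b ∈ uIcc 0 T := by rwa [uIcc_of_le hT0]
    rw [← uIcc_of_le hT0]
    exact uIcc_subset_uIcc ha' hb'
  have hconti : ∀ {v : ℝ → ℝ}, ContinuousOn v (Set.Icc 0 T) →
      ∀ a ∈ Set.Icc (0:ℝ) T, ∀ b ∈ Set.Icc (0:ℝ) T, IntervalIntegrable v volume a b :=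
    fun {v} hv a ha b hb => (hv.mono (hsub a ha b hb)).intervalIntegrable
  have hu'ii := hconti hu'c
  have huii := hconti huc
  have heii : IntervalIntegrable e volume 0 T := by
    rw [intervalIntegrable_iff, uIoc_of_le hT0]
    exact he.mono_set Ioc_subset_Icc_self
  have heabsii : IntervalIntegrable (fun t => |e t|) volume 0 T := heii.abs
  have hFiiab : ∀ a ∈ Set.Icc (0:ℝ) T, ∀ b ∈ Set.Icc (0:ℝ) T,
      IntervalIntegrable F volume a b := by
    intro a ha b hb
    rw [intervalIntegrable_iff]
    exact hFint.mono_set ((Set.Ioc_subset_Icc_self).trans (hsub a ha b hb))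
  -- FTC for u
  have hderivAt : ∀ x ∈ Set.Ioo (0:ℝ) T, HasDerivAt u (u' x) x := fun x hx =>
    (hderiv x (Ioo_subset_Icc_self hx)).hasDerivAt (Icc_mem_nhds hx.1 hx.2)
  have hftc : ∀ a ∈ Set.Icc (0:ℝ) T, ∀ b ∈ Set.Icc (0:ℝ) T,
      (∫ y in a..b, u' y) = u b - u a := by
    intro a ha b hb
    refine intervalIntegral.integral_eq_sub_of_hasDeriv_right
      (huc.mono (hsub a ha b hb)) (fun x hx => ?_) (hu'ii a ha b hb)
    have hx' : x ∈ Set.Ioo (0:ℝ) T :=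
      ⟨lt_of_le_of_lt (le_min ha.1 hb.1) hx.1, lt_of_lt_of_le hx.2 (max_le ha.2 hb.2)⟩
    exact (hderivAt x hx').hasDerivWithinAt
  -- substitution
  have hsubst : ∀ g : ℝ → ℝ, Continuous g → (∫ t in (0:ℝ)..T, g (u t) * u' t) = 0 := by
    intro g hg
    have h := intervalIntegral.integral_comp_smul_deriv'' (f := u) (f' := u') (g := g)
      (a := 0) (b := T)
      (by rw [uIcc_of_le hT0]; exact huc)
      (fun x hx => by
        rw [min_eq_left hT0, max_eq_right hT0] at hx
        exact (hderivAt x hx).hasDerivWithinAt)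
      (by rw [uIcc_of_le hT0]; exact hu'c)
      (hg.continuousOn)
    have h0 : (∫ x in (u 0)..(u T), g x) = 0 := by rw [hu0T, intervalIntegral.integral_same]
    rw [h0] at h
    calc (∫ t in (0:ℝ)..T, g (u t) * u' t) = ∫ x in (0:ℝ)..T, u' x • (g ∘ u) x := by
          apply intervalIntegral.integral_congr
          intro t _
          simp [mul_comm]
    _ = 0 := h
  -- total integral of F vanishes
  have hFT0 : (∫ s in (0:ℝ)..T, F s) = 0 := by
    have h := hsol T hTI
    rw [← hpT, ← hu'0T] at h
    linarith
  -- mean of u vanishes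
  have hθuc : ContinuousOn (fun t => θ (u t) * u' t) (Set.Icc 0 T) :=
    (hθ.comp_continuousOn huc).mul hu'c
  have hθuii := hconti hθuc 0 h0I T hTI
  have hsplit : (∫ s in (0:ℝ)..T, F s) =
      lam * ((∫ t in (0:ℝ)..T, e t) - (∫ t in (0:ℝ)..T, θ (u t) * u' t)
        + ε * ∫ t in (0:ℝ)..T, u t) := by
    simp only [hFdef]
    rw [intervalIntegral.integral_const_mul]
    congr 1
    rw [intervalIntegral.integral_add (heii.sub hθuii) ((huii 0 h0I T hTI).const_mul ε),
        intervalIntegral.integral_sub heii hθuii, intervalIntegral.integral_const_mul]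
  have heT : (∫ t in (0:ℝ)..T, e t) = 0 := by
    have h : (1/T) * (∫ t in (0:ℝ)..T, e t) = 0 := hemean
    rcases mul_eq_zero.1 h with h' | h'
    · exact absurd h' (ne_of_gt (by positivity))
    · exact h'
  have hθu0 : (∫ t in (0:ℝ)..T, θ (u t) * u' t) = 0 := hsubst θ hθ
  have huint0 : (∫ t in (0:ℝ)..T, u t) = 0 := by
    have h := hFT0
    rw [hsplit, heT, hθu0] at h
    have hlε : lam * ε ≠ 0 := by positivity
    have h2 : lam * ε * (∫ t in (0:ℝ)..T, u t) = 0 := by linear_combination h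
    exact (mul_eq_zero.1 h2).resolve_left hlε
  have hmean : meanVal T u = 0 := by simp [meanVal, huint0]
  -- sup-norm facts
  have himg : IsCompact ((fun t => |u t|) '' Set.Icc (0:ℝ) T) :=
    isCompact_Icc.image_of_continuousOn huc.abs
  have hMle : ∀ t ∈ Set.Icc (0:ℝ) T, |u t| ≤ supNorm T u := fun t ht =>
    le_csSup himg.bddAbove ⟨t, ht, rfl⟩
  have hM0 : 0 ≤ supNorm T u := (abs_nonneg _).trans (hMle 0 h0I)
  -- inner integral of F
  have hinner : ∀ s ∈ Set.Icc (0:ℝ) T,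
      (∫ t in Set.Icc s T, F t) = phi (p 0) (u' 0) - phi (p s) (u' s) := by
    intro s hs
    have hadj : (∫ t in (0:ℝ)..s, F t) + (∫ t in s..T, F t) = ∫ t in (0:ℝ)..T, F t :=
      intervalIntegral.integral_add_adjacent_intervals (hFiiab 0 h0I s hs) (hFiiab s hs T hTI)
    have hWs := hsol s hs
    have h1 : (∫ t in s..T, F t) = phi (p 0) (u' 0) - phi (p s) (u' s) := by
      have h2 : (∫ t in (0:ℝ)..s, F t) = phi (p s) (u' s) - phi (p 0) (u' 0) := by
        rw [hWs]; ring
      rw [hFT0] at hadj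
      linarith
    rw [integral_Icc_eq_integral_Ioc, ← intervalIntegral.integral_of_le hs.2, h1]
  -- integrability of F * u
  have hFuint : IntegrableOn (fun t => F t * u t) (Set.Icc 0 T) := by
    have h1 : Integrable (fun t => u t * F t) (volume.restrict (Set.Icc 0 T)) := by
      refine hFint.bdd_mul (c := supNorm T u)
        (huc.aestronglyMeasurable measurableSet_Icc) ?_
      refine (ae_restrict_iff' measurableSet_Icc).2 (ae_of_all _ fun t ht => ?_)
      simpa [Real.norm_eq_abs] using hMle t ht
    have h2 : (fun t => u t * F t) = fun t => F t * u t := funext fun t => mul_comm _ _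
    rwa [h2] at h1
  have hFuii : IntervalIntegrable (fun t => F t * u t) volume 0 T := by
    rw [intervalIntegrable_iff, uIoc_of_le hT0]
    exact hFuint.mono_set Ioc_subset_Icc_self
  have hFu0ii : IntervalIntegrable (fun t => F t * u 0) volume 0 T :=
    (hFiiab 0 h0I T hTI).mul_const (u 0)
  -- continuity of |u'|^p
  have hppow : ContinuousOn (fun t => |u' t| ^ (p t)) (Set.Icc (0:ℝ) T) :=
    ContinuousOn.rpow hu'c.abs hp (fun t ht => Or.inr (lt_trans one_pos (hp1 t ht)))
  -- the key identity
  have hkey : (∫ t in (0:ℝ)..T, F t * u t) = - ∫ t in (0:ℝ)..T, |u' t| ^ (p t) := by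
    have hsub1 : (∫ t in (0:ℝ)..T, F t * (u t - u 0))
        = (∫ t in (0:ℝ)..T, F t * u t) - ∫ t in (0:ℝ)..T, F t * u 0 := by
      rw [← intervalIntegral.integral_sub hFuii hFu0ii]
      apply intervalIntegral.integral_congr
      intro t _; ring
    have hFu0 : (∫ t in (0:ℝ)..T, F t * u 0) = 0 := by
      rw [intervalIntegral.integral_mul_const, hFT0, zero_mul]
    have hstep1 : (∫ t in (0:ℝ)..T, F t * (u t - u 0))
        = ∫ t in Set.Ioc (0:ℝ) T, F t * (∫ s in Set.Ioc (0:ℝ) t, u' s) := by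
      rw [intervalIntegral.integral_of_le hT0]
      refine setIntegral_congr_ae measurableSet_Ioc ?_
      filter_upwards with t ht
      rw [← intervalIntegral.integral_of_le ht.1.le, hftc 0 h0I t ⟨ht.1.le, ht.2⟩]
    have hfub := fubini_triangle hT hFint (hu'c.integrableOn_Icc)
    have hstep2 : (∫ s in Set.Ioc (0:ℝ) T, u' s * (∫ t in Set.Icc s T, F t))
        = ∫ s in Set.Ioc (0:ℝ) T, (u' s * phi (p 0) (u' 0) - |u' s| ^ (p s)) := by
      refine setIntegral_congr_ae measurableSet_Ioc ?_
      filter_upwards with s hs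
      have hsI : s ∈ Set.Icc (0:ℝ) T := ⟨hs.1.le, hs.2⟩
      rw [hinner s hsI, mul_sub, phi_mul_self (lt_trans one_pos (hp1 s hsI))]
    have hu'i : IntegrableOn u' (Set.Ioc (0:ℝ) T) :=
      (hu'c.integrableOn_Icc).mono_set Ioc_subset_Icc_self
    have hpi : IntegrableOn (fun s => |u' s| ^ (p s)) (Set.Ioc (0:ℝ) T) :=
      (hppow.integrableOn_Icc).mono_set Ioc_subset_Icc_self
    have hstep3 : (∫ s in Set.Ioc (0:ℝ) T, (u' s * phi (p 0) (u' 0) - |u' s| ^ (p s)))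
        = - ∫ s in Set.Ioc (0:ℝ) T, |u' s| ^ (p s) := by
      rw [integral_sub (hu'i.mul_const _) hpi, integral_mul_const]
      have : (∫ s in Set.Ioc (0:ℝ) T, u' s) = 0 := by
        rw [← intervalIntegral.integral_of_le hT0, hftc 0 h0I T hTI, ← hu0T, sub_self]
      rw [this, zero_mul, zero_sub]
    calc (∫ t in (0:ℝ)..T, F t * u t)
        = ∫ t in (0:ℝ)..T, F t * (u t - u 0) := by rw [hsub1, hFu0, sub_zero]
    _ = ∫ t in Set.Ioc (0:ℝ) T, F t * (∫ s in Set.Ioc (0:ℝ) t, u' s) := hstep1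
    _ = ∫ s in Set.Ioc (0:ℝ) T, u' s * (∫ t in Set.Icc s T, F t) := hfub
    _ = - ∫ s in Set.Ioc (0:ℝ) T, |u' s| ^ (p s) := by rw [hstep2, hstep3]
    _ = - ∫ t in (0:ℝ)..T, |u' t| ^ (p t) := by
        rw [intervalIntegral.integral_of_le hT0]
  -- energy estimate
  have heuint : IntegrableOn (fun t => e t * u t) (Set.Icc 0 T) := by
    have h1 : Integrable (fun t => u t * e t) (volume.restrict (Set.Icc 0 T)) := by
      refine he.bdd_mul (c := supNorm T u)
        (huc.aestronglyMeasurable measurableSet_Icc) ?_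
      refine (ae_restrict_iff' measurableSet_Icc).2 (ae_of_all _ fun t ht => ?_)
      simpa [Real.norm_eq_abs] using hMle t ht
    have h2 : (fun t => u t * e t) = fun t => e t * u t := funext fun t => mul_comm _ _
    rwa [h2] at h1
  have heuii : IntervalIntegrable (fun t => e t * u t) volume 0 T := by
    rw [intervalIntegrable_iff, uIoc_of_le hT0]
    exact heuint.mono_set Ioc_subset_Icc_self
  have hθuuii : IntervalIntegrable (fun t => θ (u t) * u' t * u t) volume 0 T :=
    hconti (hθuc.mul huc) 0 h0I T hTI
  have huuii : IntervalIntegrable (fun t => u t * u t) volume 0 T :=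
    hconti (huc.mul huc) 0 h0I T hTI
  have hFusplit : (∫ t in (0:ℝ)..T, F t * u t) =
      lam * ((∫ t in (0:ℝ)..T, e t * u t) - (∫ t in (0:ℝ)..T, θ (u t) * u' t * u t)
        + ε * ∫ t in (0:ℝ)..T, u t * u t) := by
    have h1 : (∫ t in (0:ℝ)..T, F t * u t)
        = ∫ t in (0:ℝ)..T, lam * (e t * u t - θ (u t) * u' t * u t + ε * (u t * u t)) := by
      apply intervalIntegral.integral_congr
      intro t _
      simp only [hFdef]; ring
    rw [h1, intervalIntegral.integral_const_mul]
    congr 1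
    rw [intervalIntegral.integral_add (heuii.sub hθuuii) (huuii.const_mul ε),
        intervalIntegral.integral_sub heuii hθuuii, intervalIntegral.integral_const_mul]
  have hθuu0 : (∫ t in (0:ℝ)..T, θ (u t) * u' t * u t) = 0 := by
    have h := hsubst (fun x => θ x * x) (hθ.mul continuous_id)
    have h2 : (∫ t in (0:ℝ)..T, θ (u t) * u' t * u t)
        = ∫ t in (0:ℝ)..T, (fun x => θ x * x) (u t) * u' t := by
      apply intervalIntegral.integral_congr
      intro t _
      show θ (u t) * u' t * u t = θ (u t) * u t * u' t
      ring
    rw [h2, h]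
  have huu0 : 0 ≤ ∫ t in (0:ℝ)..T, u t * u t :=
    intervalIntegral.integral_nonneg hT0 (fun t _ => mul_self_nonneg _)
  have hEe0 : (0:ℝ) ≤ ∫ t in (0:ℝ)..T, |e t| :=
    intervalIntegral.integral_nonneg hT0 (fun t _ => abs_nonneg _)
  have heubd : |∫ t in (0:ℝ)..T, e t * u t| ≤ (∫ t in (0:ℝ)..T, |e t|) * supNorm T u := by
    calc |∫ t in (0:ℝ)..T, e t * u t| ≤ ∫ t in (0:ℝ)..T, |e t * u t| :=
          intervalIntegral.abs_integral_le_integral_abs hT0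
    _ ≤ ∫ t in (0:ℝ)..T, |e t| * supNorm T u := by
          refine intervalIntegral.integral_mono_on hT0 heuii.abs
            (heabsii.mul_const _) (fun t ht => ?_)
          rw [abs_mul]
          exact mul_le_mul_of_nonneg_left (hMle t ht) (abs_nonneg _)
    _ = (∫ t in (0:ℝ)..T, |e t|) * supNorm T u := intervalIntegral.integral_mul_const _ _
  have hkey2 : (∫ t in (0:ℝ)..T, |u' t| ^ (p t))
      ≤ supNorm T u * (∫ t in (0:ℝ)..T, |e t|) := by
    have h1 : (∫ t in (0:ℝ)..T, |u' t| ^ (p t))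
        = lam * (-(∫ t in (0:ℝ)..T, e t * u t) - ε * ∫ t in (0:ℝ)..T, u t * u t) := by
      have h := hkey
      rw [hFusplit, hθuu0] at h
      linear_combination h
    have h2 : -(∫ t in (0:ℝ)..T, e t * u t) ≤ (∫ t in (0:ℝ)..T, |e t|) * supNorm T u :=
      le_trans (neg_le_abs _) heubd
    have h3 : 0 ≤ ε * ∫ t in (0:ℝ)..T, u t * u t := mul_nonneg hε.le huu0
    have h4 : 0 ≤ (∫ t in (0:ℝ)..T, |e t|) * supNorm T u := mul_nonneg hEe0 hM0
    nlinarith [h1, mul_le_mul_of_nonneg_left h2 hlam0.le, mul_nonneg hlam0.le h3,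
      mul_nonneg (sub_nonneg.2 hlam1) h4]
  -- comparison of exponents
  have hpmc : ContinuousOn (fun t => |u' t| ^ pm) (Set.Icc (0:ℝ) T) :=
    ContinuousOn.rpow hu'c.abs continuousOn_const (fun t _ => Or.inr hpm0)
  have hpmii := hconti hpmc 0 h0I T hTI
  have hptii := hconti hppow 0 h0I T hTI
  have hpmint : (∫ t in (0:ℝ)..T, |u' t| ^ pm)
      ≤ (∫ t in (0:ℝ)..T, |u' t| ^ (p t)) + T := by
    have h1 : (∫ t in (0:ℝ)..T, |u' t| ^ pm)
        ≤ ∫ t in (0:ℝ)..T, (|u' t| ^ (p t) + 1) := by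
      refine intervalIntegral.integral_mono_on hT0 hpmii
        (hptii.add intervalIntegrable_const) (fun t ht => ?_)
      rcases le_or_gt (|u' t|) 1 with hle | hlt
      · have ha : |u' t| ^ pm ≤ 1 := Real.rpow_le_one (abs_nonneg _) hle hpm0.le
        have hb : 0 ≤ |u' t| ^ (p t) := Real.rpow_nonneg (abs_nonneg _) _
        linarith
      · have ha : |u' t| ^ pm ≤ |u' t| ^ (p t) :=
          Real.rpow_le_rpow_of_exponent_le hlt.le (hpmle t ht)
        linarith
    have h2 : (∫ t in (0:ℝ)..T, (|u' t| ^ (p t) + 1))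
        = (∫ t in (0:ℝ)..T, |u' t| ^ (p t)) + T := by
      rw [intervalIntegral.integral_add hptii intervalIntegrable_const,
        intervalIntegral.integral_const]
      simp
    linarith
  -- Hölder
  have hA0 : 0 ≤ ∫ t in (0:ℝ)..T, |u' t| ^ pm :=
    intervalIntegral.integral_nonneg hT0 (fun t _ => Real.rpow_nonneg (abs_nonneg _) _)
  have hholder : (∫ t in (0:ℝ)..T, |u' t|)
      ≤ (∫ t in (0:ℝ)..T, |u' t| ^ pm) ^ (1/pm) * T ^ ((pm-1)/pm) := by
    set q : ℝ := pm / (pm - 1) with hq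
    have hpq : Real.HolderConjugate pm q := Real.HolderConjugate.conjExponent hpm1
    set μ := volume.restrict (Set.Ioc (0:ℝ) T) with hμ
    haveI : IsFiniteMeasure μ := by
      constructor
      rw [hμ, Measure.restrict_apply_univ]
      exact measure_Ioc_lt_top
    obtain ⟨C, hC⟩ := isCompact_Icc.exists_bound_of_continuousOn hu'c
    have hfmem : MemLp (fun t => |u' t|) (ENNReal.ofReal pm) μ := by
      refine MemLp.of_bound
        ((hu'c.mono Ioc_subset_Icc_self).abs.aestronglyMeasurable measurableSet_Ioc) C ?_
      filter_upwards [ae_restrict_mem measurableSet_Ioc] with t ht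
      have := hC t ⟨ht.1.le, ht.2⟩
      simpa [Real.norm_eq_abs, abs_abs] using this
    have hgmem : MemLp (fun _ : ℝ => (1:ℝ)) (ENNReal.ofReal q) μ := memLp_const 1
    have hH := integral_mul_le_Lp_mul_Lq_of_nonneg (μ := μ) hpq
      (ae_of_all _ fun t => abs_nonneg (u' t)) (ae_of_all _ fun _ => zero_le_one)
      hfmem hgmem
    simp only [mul_one, Real.one_rpow] at hH
    have h1q : 1/q = (pm-1)/pm := by rw [hq, one_div_div]
    have hTq : (∫ _ : ℝ, (1:ℝ) ∂μ) = T := by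
      rw [hμ, setIntegral_const, measureReal_def, Real.volume_Ioc, smul_eq_mul, mul_one,
        ENNReal.toReal_ofReal (by linarith)]
      ring
    rw [hTq, h1q] at hH
    calc (∫ t in (0:ℝ)..T, |u' t|) = ∫ t, |u' t| ∂μ := by
          rw [intervalIntegral.integral_of_le hT0, hμ]
    _ ≤ (∫ t, |u' t| ^ pm ∂μ) ^ (1/pm) * T ^ ((pm-1)/pm) := hH
    _ = (∫ t in (0:ℝ)..T, |u' t| ^ pm) ^ (1/pm) * T ^ ((pm-1)/pm) := by
          rw [intervalIntegral.integral_of_le hT0, hμ]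
  -- existence of a zero of u
  obtain ⟨a, haI, hamin⟩ := isCompact_Icc.exists_isMinOn
    (⟨0, h0I⟩ : (Set.Icc (0:ℝ) T).Nonempty) huc
  obtain ⟨b, hbI, hbmax⟩ := isCompact_Icc.exists_isMaxOn
    (⟨0, h0I⟩ : (Set.Icc (0:ℝ) T).Nonempty) huc
  have hua : u a ≤ 0 := by
    by_contra h
    push_neg at h
    have hlt : 0 < ∫ t in (0:ℝ)..T, u t := by
      calc (0:ℝ) < T * u a := mul_pos hT h
      _ = ∫ _ in (0:ℝ)..T, u a := by rw [intervalIntegral.integral_const, smul_eq_mul]; ring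
      _ ≤ ∫ t in (0:ℝ)..T, u t :=
        intervalIntegral.integral_mono_on hT0 intervalIntegrable_const
          (huii 0 h0I T hTI) (fun t ht => isMinOn_iff.1 hamin t ht)
    rw [huint0] at hlt
    exact lt_irrefl 0 hlt
  have hub : 0 ≤ u b := by
    by_contra h
    push_neg at h
    have hlt : (∫ t in (0:ℝ)..T, u t) < 0 := by
      calc (∫ t in (0:ℝ)..T, u t) ≤ ∫ _ in (0:ℝ)..T, u b :=
            intervalIntegral.integral_mono_on hT0 (huii 0 h0I T hTI)
              intervalIntegrable_const (fun t ht => isMaxOn_iff.1 hbmax t ht)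
      _ = T * u b := by rw [intervalIntegral.integral_const, smul_eq_mul]; ring
      _ < 0 := mul_neg_of_pos_of_neg hT h
    rw [huint0] at hlt
    exact lt_irrefl 0 hlt
  obtain ⟨c, hcab, hc0⟩ := intermediate_value_uIcc (huc.mono (hsub a haI b hbI))
    (show (0:ℝ) ∈ Set.uIcc (u a) (u b) from mem_uIcc.2 (Or.inl ⟨hua, hub⟩))
  have hcI : c ∈ Set.Icc (0:ℝ) T := hsub a haI b hbI hcab
  -- pointwise bound on u
  have hsup2 : ∀ t ∈ Set.Icc (0:ℝ) T, |u t| ≤ ∫ s in (0:ℝ)..T, |u' s| := by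
    intro t ht
    have h1 : u t = ∫ s in c..t, u' s := by
      rw [hftc c hcI t ht, hc0, sub_zero]
    have habsii := hconti hu'c.abs 0 h0I T hTI
    rcases le_total c t with hct | htc
    · calc |u t| = |∫ s in c..t, u' s| := by rw [h1]
      _ ≤ ∫ s in c..t, |u' s| := intervalIntegral.abs_integral_le_integral_abs hct
      _ ≤ ∫ s in (0:ℝ)..T, |u' s| :=
        intervalIntegral.integral_mono_interval hcI.1 hct ht.2
          (ae_of_all _ fun s => abs_nonneg _) habsii
    · calc |u t| = |∫ s in t..c, u' s| := by
            rw [h1, intervalIntegral.integral_symm, abs_neg]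
      _ ≤ ∫ s in t..c, |u' s| := intervalIntegral.abs_integral_le_integral_abs htc
      _ ≤ ∫ s in (0:ℝ)..T, |u' s| :=
        intervalIntegral.integral_mono_interval ht.1 htc hcI.2
          (ae_of_all _ fun s => abs_nonneg _) habsii
  have hsuple : supNorm T u ≤ ∫ s in (0:ℝ)..T, |u' s| := by
    refine csSup_le ⟨|u 0|, ⟨0, h0I, rfl⟩⟩ ?_
    rintro y ⟨t, ht, rfl⟩
    exact hsup2 t ht
  -- final algebra
  set X : ℝ := (∫ t in (0:ℝ)..T, |u' t| ^ pm) ^ (1/pm) with hX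
  have hXpow : X ^ pm = ∫ t in (0:ℝ)..T, |u' t| ^ pm := by
    rw [hX, ← Real.rpow_mul hA0, one_div_mul_cancel hpm0.ne', Real.rpow_one]
  have hMX : supNorm T u ≤ T ^ ((pm-1)/pm) * X :=
    hsuple.trans (hholder.trans_eq (mul_comm _ _))
  have hXineq : X ^ pm ≤ (∫ t in (0:ℝ)..T, |e t|) * T ^ ((pm-1)/pm) * X + T := by
    have h1 : supNorm T u * (∫ t in (0:ℝ)..T, |e t|)
        ≤ (T ^ ((pm-1)/pm) * X) * (∫ t in (0:ℝ)..T, |e t|) :=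
      mul_le_mul_of_nonneg_right hMX hEe0
    rw [hXpow]
    linarith [hpmint, hkey2, h1]
  have hXR : X ≤ R₁ := by
    by_contra hcon
    push_neg at hcon
    have hX0 : 0 < X := hR₁pos.trans hcon
    set cc : ℝ := (∫ t in (0:ℝ)..T, |e t|) * T ^ ((pm-1)/pm) with hcc
    have hcc0 : 0 ≤ cc := mul_nonneg hEe0 (Real.rpow_nonneg hT0 _)
    have hr0 : 0 < R₁ / X := div_pos hR₁pos hX0
    have hr1 : R₁ / X < 1 := (div_lt_one hX0).2 hcon
    have hRX : (R₁ / X) * X = R₁ := div_mul_cancel₀ _ hX0.ne'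
    have h2 : R₁ ^ pm = (R₁/X) ^ pm * X ^ pm := by
      rw [← Real.mul_rpow hr0.le hX0.le, hRX]
    have h3 : (R₁/X) ^ pm < R₁/X := by
      calc (R₁/X) ^ pm < (R₁/X) ^ (1:ℝ) := Real.rpow_lt_rpow_of_exponent_gt hr0 hr1 hpm1
      _ = R₁/X := Real.rpow_one _
    have hXpm0 : 0 < X ^ pm := Real.rpow_pos_of_pos hX0 pm
    have h4 : R₁ ^ pm < (R₁/X) * X ^ pm := by
      rw [h2]
      exact mul_lt_mul_of_pos_right h3 hXpm0
    have h5 : (R₁/X) * X ^ pm ≤ (R₁/X) * (cc * X + T) :=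
      mul_le_mul_of_nonneg_left hXineq hr0.le
    have h6 : (R₁/X) * (cc * X + T) = cc * R₁ + (R₁/X) * T := by
      calc (R₁/X) * (cc * X + T) = cc * ((R₁/X) * X) + (R₁/X) * T := by ring
      _ = cc * R₁ + (R₁/X) * T := by rw [hRX]
    have h7 : cc * R₁ + (R₁/X) * T < cc * R₁ + T := by
      have h7' := mul_lt_mul_of_pos_right hr1 hT
      linarith
    have h8 : R₁ ^ pm = cc * R₁ + T := by linarith [hR₁root]
    linarith
  refine ⟨hmean, hXR, ?_⟩
  calc supNorm T u ≤ T ^ ((pm-1)/pm) * X := hMX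
  _ ≤ T ^ ((pm - 1) / pm) * R₁ := mul_le_mul_of_nonneg_left hXR (Real.rpow_nonneg hT0 _)
end

section
/- Let f : [0,∞) → ℝ, g : (0,∞) → ℝ, h : [0,T] → ℝ be continuous, let α be a lower solution and β an upper solution of problem (P) with α(t) ≤ β(t) for all t. Define γ(t,x) = β(t) if x > β(t), γ(t,x) = x if α(t) ≤ x ≤ β(t), γ(t,x) = α(t) if x < α(t), and ℓ*(t,x,y) = h(t) − g(γ(t,x)) − f(γ(t,x))y + x − γ(t,x). Let M₁ > ‖β‖_∞ be a constant such that h(t) − g(β(t)) + M₁ − β(t) > 0 and h(t) − g(α(t)) − M₁ − α(t) < 0 for all t ∈ [0,T]. Then for every λ ∈ (0,1), every C¹ function u : [0,T] → ℝ with t ↦ φ_{p(t)}(u'(t)) of class C¹ satisfying (φ_{p(t)}(u'(t)))' = λ ℓ*(t, u(t), u'(t)) on [0,T] together with u(0) − u(T) = 0 = u'(0) − u'(T) satisfies ‖u‖_∞ < M₁. -/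
open Set MeasureTheory

/-- (classical, positive) solution of problem (P):
`(φ_{p(t)}(u'))' + f(u)u' + g(u) = h(t)` on `[0,T]`, `u(0)-u(T) = 0 = u'(0)-u'(T)`. -/
def IsSolP (T : ℝ) (p f g h u : ℝ → ℝ) : Prop :=
  ∃ u' w' : ℝ → ℝ,
    IsC1On T u u' ∧ (∀ t ∈ Set.Icc 0 T, 0 < u t) ∧
    IsC1On T (fun t => phi (p t) (u' t)) w' ∧
    u 0 = u T ∧ u' 0 = u' T ∧
    ∀ t ∈ Set.Icc 0 T, w' t + f (u t) * u' t + g (u t) = h t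

/-- lower solution of problem (P). -/
def IsLowerSol (T : ℝ) (p f g h α : ℝ → ℝ) : Prop :=
  ∃ α' w' : ℝ → ℝ,
    IsC1On T α α' ∧ (∀ t ∈ Set.Icc 0 T, 0 < α t) ∧
    IsC1On T (fun t => phi (p t) (α' t)) w' ∧
    α 0 = α T ∧ α' T ≤ α' 0 ∧
    ∀ t ∈ Set.Icc 0 T, h t ≤ w' t + f (α t) * α' t + g (α t)

/-- upper solution of problem (P). -/
def IsUpperSol (T : ℝ) (p f g h β : ℝ → ℝ) : Prop :=
  ∃ β' w' : ℝ → ℝ,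
    IsC1On T β β' ∧ (∀ t ∈ Set.Icc 0 T, 0 < β t) ∧
    IsC1On T (fun t => phi (p t) (β' t)) w' ∧
    β 0 = β T ∧ β' 0 ≤ β' T ∧
    ∀ t ∈ Set.Icc 0 T, w' t + f (β t) * β' t + g (β t) ≤ h t


open Set Filter Topology

lemma neBot_left (T : ℝ) (hT : 0 < T) : (𝓝[Set.Icc 0 T \ {0}] (0:ℝ)).NeBot := by
  apply mem_closure_iff_nhdsWithin_neBot.mp
  have h1 : Set.Ioc (0:ℝ) T ⊆ Set.Icc 0 T \ {0} := fun t ht =>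
    ⟨⟨ht.1.le, ht.2⟩, ne_of_gt ht.1⟩
  have h2 : (0:ℝ) ∈ closure (Set.Ioc (0:ℝ) T) := by
    rw [closure_Ioc hT.ne]; exact ⟨le_refl _, hT.le⟩
  exact closure_mono h1 h2

lemma neBot_right (T : ℝ) (hT : 0 < T) : (𝓝[Set.Icc 0 T \ {T}] T).NeBot := by
  apply mem_closure_iff_nhdsWithin_neBot.mp
  have h1 : Set.Ico (0:ℝ) T ⊆ Set.Icc 0 T \ {T} := fun t ht =>
    ⟨⟨ht.1, ht.2.le⟩, ne_of_lt ht.2⟩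
  have h2 : T ∈ closure (Set.Ico (0:ℝ) T) := by
    rw [closure_Ico hT.ne]; exact ⟨hT.le, le_refl _⟩
  exact closure_mono h1 h2

lemma left_deriv_nonpos {T : ℝ} (hT : 0 < T) {u : ℝ → ℝ} {d : ℝ}
    (hd : HasDerivWithinAt u d (Set.Icc 0 T) 0)
    (hmax : ∀ t ∈ Set.Icc 0 T, u t ≤ u 0) : d ≤ 0 := by
  have hne := neBot_left T hT
  have htd := hasDerivWithinAt_iff_tendsto_slope.mp hd
  refine le_of_tendsto htd (eventually_of_mem self_mem_nhdsWithin fun t ht => ?_)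
  have ht0 : 0 < t := lt_of_le_of_ne ht.1.1 (fun h => ht.2 h.symm)
  have : u t ≤ u 0 := hmax t ht.1
  simp only [slope, vsub_eq_sub, smul_eq_mul]
  have h1 : (0:ℝ) ≤ (t - 0)⁻¹ := inv_nonneg.mpr (by linarith)
  nlinarith

lemma right_deriv_nonneg {T : ℝ} (hT : 0 < T) {u : ℝ → ℝ} {d : ℝ}
    (hd : HasDerivWithinAt u d (Set.Icc 0 T) T)
    (hmax : ∀ t ∈ Set.Icc 0 T, u t ≤ u T) : 0 ≤ d := by
  have hne := neBot_right T hT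
  have htd := hasDerivWithinAt_iff_tendsto_slope.mp hd
  refine ge_of_tendsto htd (eventually_of_mem self_mem_nhdsWithin fun t ht => ?_)
  have ht0 : t < T := lt_of_le_of_ne ht.1.2 ht.2
  have : u t ≤ u T := hmax t ht.1
  simp only [slope, vsub_eq_sub, smul_eq_mul]
  have h1 : (t - T)⁻¹ ≤ 0 := inv_nonpos.mpr (by linarith)
  nlinarith


lemma deriv_zero_at_max {T t₀ : ℝ} (hT : 0 < T) {u u' : ℝ → ℝ}
    (hu : IsC1On T u u') (hbc : u 0 = u T) (hbc' : u' 0 = u' T)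
    (ht₀ : t₀ ∈ Set.Ico 0 T) (hmax : ∀ t ∈ Set.Icc 0 T, u t ≤ u t₀) :
    u' t₀ = 0 := by
  rcases eq_or_lt_of_le ht₀.1 with h0 | h0
  · subst h0
    have h1 : u' 0 ≤ 0 := left_deriv_nonpos hT
      (hu.1 0 ⟨le_refl _, hT.le⟩) hmax
    have h2 : 0 ≤ u' T := right_deriv_nonneg hT
      (hu.1 T ⟨hT.le, le_refl _⟩) (fun t ht => (hmax t ht).trans_eq hbc)
    linarith [hbc'.symm ▸ h2]
  · have hmem : Set.Icc (0:ℝ) T ∈ 𝓝 t₀ := Icc_mem_nhds h0 ht₀.2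
    have hda : HasDerivAt u (u' t₀) t₀ :=
      (hu.1 t₀ ⟨ht₀.1, ht₀.2.le⟩).hasDerivAt hmem
    have hlm : IsLocalMax u t₀ := by
      apply Filter.eventually_of_mem hmem
      exact fun t ht => hmax t ht
    exact hlm.hasDerivAt_eq_zero hda

lemma core_contra {T t₀ : ℝ} (hT : 0 < T) {u u' w w' : ℝ → ℝ}
    (hu : IsC1On T u u') (hw : IsC1On T w w')
    (hsign : ∀ t ∈ Set.Icc 0 T, 0 < w t → 0 < u' t)
    (ht₀ : t₀ ∈ Set.Ico 0 T) (hmax : ∀ t ∈ Set.Icc 0 T, u t ≤ u t₀)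
    (hw0 : w t₀ = 0) (hw' : 0 < w' t₀) : False := by
  have ht₀T : t₀ ∈ Set.Icc (0:ℝ) T := ⟨ht₀.1, ht₀.2.le⟩
  have htd := hasDerivWithinAt_iff_tendsto_slope.mp (hw.1 t₀ ht₀T)
  have hev : ∀ᶠ t in 𝓝[Set.Icc 0 T \ {t₀}] t₀, 0 < slope w t₀ t :=
    htd.eventually (lt_mem_nhds hw')
  obtain ⟨V, hVopen, hVmem, hVsub⟩ := mem_nhdsWithin.mp hev
  obtain ⟨ε, hε, hball⟩ := Metric.isOpen_iff.mp hVopen t₀ hVmem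
  set b := min (t₀ + ε) T with hbdef
  have hb : t₀ < b := lt_min (by linarith) ht₀.2
  have hsub : Set.Icc t₀ b ⊆ Set.Icc 0 T := fun x hx =>
    ⟨le_trans ht₀.1 hx.1, le_trans hx.2 (min_le_right _ _)⟩
  have hpos : ∀ x ∈ Set.Ioo t₀ b, 0 < w x := by
    intro x hx
    have hxI : x ∈ Set.Icc (0:ℝ) T := hsub ⟨hx.1.le, hx.2.le⟩
    have hxV : x ∈ V := by
      apply hball
      rw [Metric.mem_ball, Real.dist_eq, abs_lt]
      have := hx.2.trans_le (min_le_left _ _)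
      constructor <;> [linarith [hx.1]; linarith]
    have hslope : 0 < slope w t₀ x := hVsub ⟨hxV, hxI, ne_of_gt hx.1⟩
    simp only [slope, vsub_eq_sub, smul_eq_mul, hw0, sub_zero] at hslope
    have hinv : 0 < (x - t₀)⁻¹ := inv_pos.mpr (by linarith [hx.1])
    nlinarith
  have hmono : StrictMonoOn u (Set.Icc t₀ b) := by
    apply strictMonoOn_of_hasDerivWithinAt_pos (f' := u') (convex_Icc t₀ b)
    · exact fun x hx => ((hu.1 x (hsub hx)).continuousWithinAt).mono hsub
    · intro x hx
      rw [interior_Icc] at hx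
      exact (hu.1 x (hsub ⟨hx.1.le, hx.2.le⟩)).mono
        (by rw [interior_Icc]; exact fun y hy => hsub ⟨hy.1.le, hy.2.le⟩)
    · intro x hx
      rw [interior_Icc] at hx
      exact hsign x (hsub ⟨hx.1.le, hx.2.le⟩) (hpos x hx)
  have h1 : u t₀ < u b :=
    hmono (Set.left_mem_Icc.2 hb.le) (Set.right_mem_Icc.2 hb.le) hb
  have h2 : u b ≤ u t₀ := hmax b (hsub (Set.right_mem_Icc.2 hb.le))
  linarith

lemma exists_max_Ico {T : ℝ} (hT : 0 < T) {u : ℝ → ℝ}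
    (hc : ContinuousOn u (Set.Icc 0 T)) (hbc : u 0 = u T) :
    ∃ t₀ ∈ Set.Ico 0 T, ∀ t ∈ Set.Icc 0 T, u t ≤ u t₀ := by
  obtain ⟨t₁, ht₁, hmax⟩ := isCompact_Icc.exists_isMaxOn ⟨0, ⟨le_refl _, hT.le⟩⟩ hc
  rw [isMaxOn_iff] at hmax
  by_cases hE : t₁ = T
  · exact ⟨0, ⟨le_refl _, hT⟩, fun t ht => (hmax t ht).trans_eq (hE ▸ hbc.symm)⟩
  · exact ⟨t₁, ⟨ht₁.1, lt_of_le_of_ne ht₁.2 hE⟩, hmax⟩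


lemma phi_zero (q : ℝ) : phi q 0 = 0 := by simp [phi]

lemma pos_of_phi_pos {q x : ℝ} (h : 0 < phi q x) : 0 < x := by
  by_contra hx
  push_neg at hx
  have h1 : (0:ℝ) ≤ |x| ^ (q - 2) := Real.rpow_nonneg (abs_nonneg x) _
  unfold phi at h
  nlinarith

lemma neg_of_phi_neg {q x : ℝ} (h : phi q x < 0) : x < 0 := by
  by_contra hx
  push_neg at hx
  have h1 : (0:ℝ) ≤ |x| ^ (q - 2) := Real.rpow_nonneg (abs_nonneg x) _
  unfold phi at h
  nlinarith

theorem stmt8 (T : ℝ) (hT : 0 < T) (p : ℝ → ℝ)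
    (hp : ContinuousOn p (Set.Icc 0 T)) (hp1 : ∀ t ∈ Set.Icc 0 T, 1 < p t)
    (hpT : p 0 = p T)
    (f g h : ℝ → ℝ)
    (hf : ContinuousOn f (Set.Ici 0)) (hg : ContinuousOn g (Set.Ioi 0))
    (hh : ContinuousOn h (Set.Icc 0 T))
    (α β : ℝ → ℝ) (hα : IsLowerSol T p f g h α) (hβ : IsUpperSol T p f g h β)
    (hαβ : ∀ t ∈ Set.Icc 0 T, α t ≤ β t)
    (γ : ℝ → ℝ → ℝ)
    (hγ : ∀ t x, γ t x = if β t < x then β t else if x < α t then α t else x)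
    (lstar : ℝ → ℝ → ℝ → ℝ)
    (hlstar : ∀ t x y, lstar t x y = h t - g (γ t x) - f (γ t x) * y + x - γ t x)
    (M₁ : ℝ) (hM₁β : supNorm T β < M₁)
    (hM₁a : ∀ t ∈ Set.Icc 0 T, 0 < h t - g (β t) + M₁ - β t)
    (hM₁b : ∀ t ∈ Set.Icc 0 T, h t - g (α t) - M₁ - α t < 0)
    (lam : ℝ) (hlam : lam ∈ Set.Ioo (0:ℝ) 1)
    (u u' w' : ℝ → ℝ)
    (hu : IsC1On T u u')
    (hw : IsC1On T (fun t => phi (p t) (u' t)) w')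
    (hbc : u 0 = u T) (hbc' : u' 0 = u' T)
    (heq : ∀ t ∈ Set.Icc 0 T, w' t = lam * lstar t (u t) (u' t)) :
    supNorm T u < M₁ := by
  obtain ⟨α', wα', hαC1, hαpos, _⟩ := hα
  obtain ⟨β', wβ', hβC1, hβpos, _⟩ := hβ
  have hcontu : ContinuousOn u (Set.Icc 0 T) :=
    fun t ht => (hu.1 t ht).continuousWithinAt
  have hcontβ : ContinuousOn β (Set.Icc 0 T) :=
    fun t ht => (hβC1.1 t ht).continuousWithinAt
  have h0I : (0:ℝ) ∈ Set.Icc (0:ℝ) T := ⟨le_refl _, hT.le⟩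
  have hβbd : ∀ t ∈ Set.Icc 0 T, |β t| ≤ supNorm T β := by
    intro t ht
    exact le_csSup (isCompact_Icc.image_of_continuousOn hcontβ.abs).bddAbove
      ⟨t, ht, rfl⟩
  have hM₁pos : 0 < M₁ :=
    lt_of_le_of_lt (le_trans (abs_nonneg _) (hβbd 0 h0I)) hM₁β
  have key : ∀ t ∈ Set.Icc 0 T, |u t| < M₁ := by
    by_contra hcon
    push_neg at hcon
    obtain ⟨s, hs, hMs⟩ := hcon
    rcases le_abs.mp hMs with hcase | hcase
    · -- maximum case : u s ≥ M₁
      obtain ⟨t₀, ht₀, hmax⟩ := exists_max_Ico hT hcontu hbc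
      have ht₀I : t₀ ∈ Set.Icc (0:ℝ) T := ⟨ht₀.1, ht₀.2.le⟩
      have hut₀ : M₁ ≤ u t₀ := le_trans hcase (hmax s hs)
      have hd0 : u' t₀ = 0 := deriv_zero_at_max hT hu hbc hbc' ht₀ hmax
      have hβlt : β t₀ < u t₀ :=
        lt_of_le_of_lt (le_trans (le_abs_self _) (hβbd t₀ ht₀I))
          (lt_of_lt_of_le hM₁β hut₀)
      have hγval : γ t₀ (u t₀) = β t₀ := by rw [hγ, if_pos hβlt]
      have hl : 0 < lstar t₀ (u t₀) (u' t₀) := by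
        rw [hlstar, hγval, hd0]
        have := hM₁a t₀ ht₀I
        simp only [mul_zero]
        linarith
      have hw'pos : 0 < w' t₀ := by
        rw [heq t₀ ht₀I]
        exact mul_pos hlam.1 hl
      exact core_contra hT hu hw
        (fun t ht hwt => pos_of_phi_pos hwt) ht₀ hmax
        (by simp [hd0, phi]) hw'pos
    · -- minimum case : u s ≤ -M₁
      have hbcneg : -u 0 = -u T := by rw [hbc]
      obtain ⟨t₀, ht₀, hmax⟩ := exists_max_Ico hT hcontu.neg hbcneg
      have ht₀I : t₀ ∈ Set.Icc (0:ℝ) T := ⟨ht₀.1, ht₀.2.le⟩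
      have huC1n : IsC1On T (fun t => -u t) (fun t => -u' t) :=
        ⟨fun t ht => (hu.1 t ht).neg, hu.2.neg⟩
      have hd0' : -u' t₀ = 0 := by
        exact deriv_zero_at_max (u' := fun t => -u' t) hT huC1n hbcneg (by simp [hbc']) ht₀ hmax
      have hd0 : u' t₀ = 0 := by linarith
      have hut₀ : u t₀ ≤ -M₁ := by
        have := hmax s hs
        simp only [Pi.neg_apply] at this
        linarith
      have hαpos' : 0 < α t₀ := hαpos t₀ ht₀I
      have h1 : u t₀ < α t₀ := by linarith
      have h2 : ¬ β t₀ < u t₀ := not_lt.mpr (by linarith [hαβ t₀ ht₀I])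
      have hγval : γ t₀ (u t₀) = α t₀ := by rw [hγ, if_neg h2, if_pos h1]
      have hl : lstar t₀ (u t₀) (u' t₀) < 0 := by
        rw [hlstar, hγval, hd0]
        have := hM₁b t₀ ht₀I
        simp only [mul_zero]
        linarith
      have hw'neg : w' t₀ < 0 := by
        rw [heq t₀ ht₀I]
        exact mul_neg_of_pos_of_neg hlam.1 hl
      have hwC1n : IsC1On T (fun t => -(phi (p t) (u' t))) (fun t => -w' t) :=
        ⟨fun t ht => (hw.1 t ht).neg, hw.2.neg⟩
      exact core_contra hT huC1n hwC1n
        (fun t ht hwt => by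
          have : phi (p t) (u' t) < 0 := by linarith
          have := neg_of_phi_neg this
          linarith)
        ht₀ hmax (by simp [hd0, phi]) (by linarith)
  obtain ⟨t₁, ht₁, hmax1⟩ :=
    isCompact_Icc.exists_isMaxOn ⟨0, h0I⟩ hcontu.abs
  rw [isMaxOn_iff] at hmax1
  have hle : supNorm T u ≤ |u t₁| := by
    unfold supNorm
    refine csSup_le ⟨|u 0|, ⟨0, h0I, rfl⟩⟩ ?_
    rintro y ⟨t, ht, rfl⟩
    exact hmax1 t ht
  exact lt_of_le_of_lt hle (key t₁ ht₁)
end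

section
/- Let M₁ > 0 and c₃ > 0, and let u : [0,T] → ℝ be a C¹ function with u(0) = u(T), ‖u‖_∞ ≤ M₁, such that t ↦ φ_{p(t)}(u'(t)) is of class C¹ and |(φ_{p(t)}(u'(t)))'| ≤ c₃(1 + |u'(t)|) for all t ∈ [0,T]. If M₂ > 1 satisfies (M₂^{p_- − 1} − (2M₁/T + 1)^{p⁺ − 1})/c₃ > T + 2M₁, then ‖u'‖_∞ < M₂. -/
open Set MeasureTheory

theorem stmt9 (T : ℝ) (hT : 0 < T) (p : ℝ → ℝ)
    (hp : ContinuousOn p (Set.Icc 0 T)) (hp1 : ∀ t ∈ Set.Icc 0 T, 1 < p t)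
    (hpT : p 0 = p T)
    (pm pp : ℝ) (hpm : pm = sInf (p '' Set.Icc 0 T)) (hpp : pp = sSup (p '' Set.Icc 0 T))
    (M₁ c₃ : ℝ) (hM₁pos : 0 < M₁) (hc₃ : 0 < c₃)
    (u u' w' : ℝ → ℝ)
    (hu : IsC1On T u u') (hbc : u 0 = u T)
    (husup : supNorm T u ≤ M₁)
    (hw : IsC1On T (fun t => phi (p t) (u' t)) w')
    (hbound : ∀ t ∈ Set.Icc 0 T, |w' t| ≤ c₃ * (1 + |u' t|))
    (M₂ : ℝ) (hM₂ : 1 < M₂)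
    (hM₂' : T + 2 * M₁ < (M₂ ^ (pm - 1) - (2 * M₁ / T + 1) ^ (pp - 1)) / c₃) :
    supNorm T u' < M₂ := by
  obtain ⟨hud, huc⟩ := hu
  obtain ⟨hwd, hwc⟩ := hw
  have h0mem : (0:ℝ) ∈ Icc (0:ℝ) T := ⟨le_refl 0, hT.le⟩
  have hK : IsCompact (Icc (0:ℝ) T) := isCompact_Icc
  have hKne : (Icc (0:ℝ) T).Nonempty := ⟨0, h0mem⟩
  have hucont : ContinuousOn u (Icc 0 T) := fun t ht => (hud t ht).continuousWithinAt
  have hwcont : ContinuousOn (fun t => phi (p t) (u' t)) (Icc 0 T) :=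
    fun t ht => (hwd t ht).continuousWithinAt
  have hu'abs : ContinuousOn (fun t => |u' t|) (Icc 0 T) := huc.abs
  -- pm, pp facts
  have hbddp : BddBelow (p '' Icc 0 T) := (hK.image_of_continuousOn hp).bddBelow
  have hbddp' : BddAbove (p '' Icc 0 T) := (hK.image_of_continuousOn hp).bddAbove
  have hpmle : ∀ t ∈ Icc (0:ℝ) T, pm ≤ p t := fun t ht => hpm ▸ csInf_le hbddp ⟨t, ht, rfl⟩
  have hplepp : ∀ t ∈ Icc (0:ℝ) T, p t ≤ pp := fun t ht => hpp ▸ le_csSup hbddp' ⟨t, ht, rfl⟩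
  have hpm1 : 1 < pm := by
    obtain ⟨tmin, htmin, hmin⟩ := hK.exists_isMinOn hKne hp
    have heq : sInf (p '' Icc 0 T) = p tmin := by
      apply le_antisymm (csInf_le hbddp ⟨tmin, htmin, rfl⟩)
      refine le_csInf ⟨p tmin, tmin, htmin, rfl⟩ ?_
      rintro x ⟨s, hs, rfl⟩
      exact hmin hs
    rw [hpm, heq]
    exact hp1 tmin htmin
  -- pointwise bound on u
  have hub : ∀ t ∈ Icc (0:ℝ) T, |u t| ≤ M₁ := by
    intro t ht
    exact le_trans (le_csSup (hK.image_of_continuousOn hucont.abs).bddAbove ⟨t, ht, rfl⟩) husup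
  -- max of |u'|
  obtain ⟨ts, htsK, hts⟩ := hK.exists_isMaxOn hKne hu'abs
  have hsup : supNorm T u' = |u' ts| := by
    unfold supNorm
    apply le_antisymm
    · exact csSup_le (hKne.image _) (by rintro x ⟨s, hs, rfl⟩; exact hts hs)
    · exact le_csSup (hK.image_of_continuousOn hu'abs).bddAbove ⟨ts, htsK, rfl⟩
  by_contra hcon
  push_neg at hcon
  rw [hsup] at hcon
  -- a zero of u'
  obtain ⟨t₀, ht₀, ht₀'⟩ := exists_hasDerivAt_eq_slope u u' hT hucont
    (fun x hx => (hud x (Ioo_subset_Icc_self hx)).hasDerivAt (Icc_mem_nhds hx.1 hx.2))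
  have hu't₀ : u' t₀ = 0 := by rw [ht₀', ← hbc, sub_self, zero_div]
  set lam : ℝ := 2 * M₁ / T + 1 with hlamdef
  have hlam0 : 0 < 2 * M₁ / T := by positivity
  have hlam1 : 1 ≤ lam := by simp only [hlamdef]; linarith
  have hfin : (T + 2 * M₁) * c₃ < M₂ ^ (pm - 1) - lam ^ (pp - 1) := (lt_div_iff₀ hc₃).mp hM₂'
  have hfin' : c₃ * (T + 2 * M₁) < M₂ ^ (pm - 1) - lam ^ (pp - 1) := by
    rw [mul_comm]; exact hfin
  have hlamM₂ : lam < M₂ := by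
    by_contra hle
    push_neg at hle
    have h1 : M₂ ^ (pm - 1) ≤ lam ^ (pm - 1) :=
      Real.rpow_le_rpow (by linarith) hle (by linarith)
    have h2 : lam ^ (pm - 1) ≤ lam ^ (pp - 1) :=
      Real.rpow_le_rpow_of_exponent_le hlam1
        (by linarith [hpmle 0 h0mem, hplepp 0 h0mem])
    have h3 : 0 < c₃ * (T + 2 * M₁) := by positivity
    linarith
  -- key estimate
  have key : ∀ a b : ℝ, 0 ≤ a → a < b → b ≤ T → (∀ s ∈ Ioo a b, u' s ≠ 0) →
      |phi (p b) (u' b) - phi (p a) (u' a)| ≤ c₃ * (T + 2 * M₁) := by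
    intro a b ha hab hb hne
    have hsub : Icc a b ⊆ Icc 0 T := Icc_subset_Icc ha hb
    have hsub' : Ioo a b ⊆ Ioo 0 T := fun x hx => ⟨lt_of_le_of_lt ha hx.1, lt_of_lt_of_le hx.2 hb⟩
    have huIcc : uIcc a b = Icc a b := uIcc_of_le hab.le
    have hw'int : IntervalIntegrable w' MeasureTheory.volume a b := by
      apply ContinuousOn.intervalIntegrable
      rw [huIcc]
      exact hwc.mono hsub
    have hu'int : IntervalIntegrable u' MeasureTheory.volume a b := by
      apply ContinuousOn.intervalIntegrable
      rw [huIcc]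
      exact huc.mono hsub
    have hftc : ∫ s in a..b, w' s = phi (p b) (u' b) - phi (p a) (u' a) := by
      apply intervalIntegral.integral_eq_sub_of_hasDeriv_right_of_le hab.le (hwcont.mono hsub)
        ?_ hw'int
      intro x hx
      exact ((hwd x (hsub (Ioo_subset_Icc_self hx))).hasDerivAt
        (Icc_mem_nhds (hsub' hx).1 (hsub' hx).2)).hasDerivWithinAt
    have hftcu : ∫ s in a..b, u' s = u b - u a := by
      apply intervalIntegral.integral_eq_sub_of_hasDeriv_right_of_le hab.le (hucont.mono hsub)
        ?_ hu'int
      intro x hx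
      exact ((hud x (hsub (Ioo_subset_Icc_self hx))).hasDerivAt
        (Icc_mem_nhds (hsub' hx).1 (hsub' hx).2)).hasDerivWithinAt
    -- sign constancy of u' on [a,b]
    have hivt : ∀ s ∈ Icc a b, ∀ t ∈ Icc a b, u' s < 0 → 0 < u' t → False := by
      intro s hs t ht hsneg htpos
      rcases le_or_gt s t with hst | hst
      · obtain ⟨z, hz, hz0⟩ := intermediate_value_Icc hst
          (huc.mono ((Icc_subset_Icc hs.1 ht.2).trans hsub)) ⟨hsneg.le, htpos.le⟩
        have hzs : s < z := lt_of_le_of_ne hz.1 (fun he => hsneg.ne (he ▸ hz0))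
        have hzt : z < t := lt_of_le_of_ne hz.2 (fun he => htpos.ne' (he ▸ hz0))
        exact hne z ⟨lt_of_le_of_lt hs.1 hzs, lt_of_lt_of_le hzt ht.2⟩ hz0
      · obtain ⟨z, hz, hz0⟩ := intermediate_value_Icc' hst.le
          (huc.mono ((Icc_subset_Icc ht.1 hs.2).trans hsub)) ⟨hsneg.le, htpos.le⟩
        have hzt : t < z := lt_of_le_of_ne hz.1 (fun he => htpos.ne' (he ▸ hz0))
        have hzs : z < s := lt_of_le_of_ne hz.2 (fun he => hsneg.ne (he ▸ hz0))
        exact hne z ⟨lt_of_le_of_lt ht.1 hzt, lt_of_lt_of_le hzs hs.2⟩ hz0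
    have hmid : (a + b) / 2 ∈ Ioo a b := ⟨by linarith, by linarith⟩
    have hmid' : (a + b) / 2 ∈ Icc a b := ⟨hmid.1.le, hmid.2.le⟩
    have hsign : (∀ s ∈ Icc a b, 0 ≤ u' s) ∨ (∀ s ∈ Icc a b, u' s ≤ 0) := by
      rcases lt_trichotomy (u' ((a + b) / 2)) 0 with hc | hc | hc
      · right
        intro s hs
        by_contra hpos
        push_neg at hpos
        exact hivt _ hmid' s hs hc hpos
      · exact absurd hc (hne _ hmid)
      · left
        intro s hs
        by_contra hneg
        push_neg at hneg
        exact hivt s hs _ hmid' hneg hc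
    have hintabs : ∫ s in a..b, |u' s| ≤ 2 * M₁ := by
      have h1 := hub a (hsub ⟨le_refl a, hab.le⟩)
      have h2 := hub b (hsub ⟨hab.le, le_refl b⟩)
      obtain ⟨h1a, h1b⟩ := abs_le.mp h1
      obtain ⟨h2a, h2b⟩ := abs_le.mp h2
      rcases hsign with hpos | hneg
      · have heq : EqOn (fun s => |u' s|) u' (uIcc a b) := by
          intro s hs
          rw [huIcc] at hs
          exact abs_of_nonneg (hpos s hs)
        rw [intervalIntegral.integral_congr heq, hftcu]
        linarith
      · have heq : EqOn (fun s => |u' s|) (fun s => -u' s) (uIcc a b) := by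
          intro s hs
          rw [huIcc] at hs
          exact abs_of_nonpos (hneg s hs)
        rw [intervalIntegral.integral_congr heq, intervalIntegral.integral_neg, hftcu]
        linarith
    have hrhsint : IntervalIntegrable (fun s => c₃ * (1 + |u' s|)) MeasureTheory.volume a b := by
      apply ContinuousOn.intervalIntegrable
      rw [huIcc]
      exact (continuousOn_const.mul (continuousOn_const.add (huc.mono hsub).abs))
    rw [← hftc]
    calc |∫ s in a..b, w' s| ≤ ∫ s in a..b, |w' s| :=
          intervalIntegral.abs_integral_le_integral_abs hab.le
      _ ≤ ∫ s in a..b, c₃ * (1 + |u' s|) := by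
          apply intervalIntegral.integral_mono_on hab.le hw'int.abs hrhsint
          intro s hs
          exact hbound s (hsub hs)
      _ = c₃ * ((b - a) + ∫ s in a..b, |u' s|) := by
          rw [intervalIntegral.integral_const_mul]
          congr 1
          rw [intervalIntegral.integral_add intervalIntegrable_const hu'int.abs,
            intervalIntegral.integral_const]
          simp
      _ ≤ c₃ * (T + 2 * M₁) := by
          apply mul_le_mul_of_nonneg_left _ hc₃.le
          have : b - a ≤ T := by linarith [(hsub ⟨le_refl a, hab.le⟩).1, (hsub ⟨hab.le, le_refl b⟩).2]
          linarith
  -- construct t₁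
  have hlamlt : lam < |u' ts| := lt_of_lt_of_le hlamM₂ hcon
  have ht₀ne : t₀ ≠ ts := by
    intro he
    rw [← he, hu't₀] at hlamlt
    simp at hlamlt
    linarith
  obtain ⟨t₁, ht₁K, ht₁lam, hkey⟩ : ∃ t₁ ∈ Icc (0:ℝ) T, |u' t₁| ≤ lam ∧
      |phi (p ts) (u' ts) - phi (p t₁) (u' t₁)| ≤ c₃ * (T + 2 * M₁) := by
    rcases lt_or_gt_of_ne ht₀ne with hlt | hgt
    · -- t₀ < ts
      set S := Icc t₀ ts ∩ (fun s => |u' s|) ⁻¹' Iic lam with hSdef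
      have hSsubK : Icc t₀ ts ⊆ Icc 0 T := Icc_subset_Icc ht₀.1.le htsK.2
      have hSne : S.Nonempty := ⟨t₀, ⟨le_refl _, hlt.le⟩, by
        simp only [mem_preimage, mem_Iic, hu't₀, abs_zero]; linarith⟩
      have hSbdd : BddAbove S := ⟨ts, fun x hx => hx.1.2⟩
      have hSclosed : IsClosed S :=
        ContinuousOn.preimage_isClosed_of_isClosed (hu'abs.mono hSsubK) isClosed_Icc isClosed_Iic
      set t₁ := sSup S with ht₁def
      have ht₁S : t₁ ∈ S := hSclosed.csSup_mem hSne hSbdd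
      have ht₁lam : |u' t₁| ≤ lam := ht₁S.2
      have ht₁lt : t₁ < ts := lt_of_le_of_ne ht₁S.1.2 (by
        intro he
        rw [he] at ht₁lam
        linarith)
      have hnz : ∀ s ∈ Ioo t₁ ts, u' s ≠ 0 := by
        intro s hs h0
        have hsS : s ∈ S := ⟨⟨le_trans ht₁S.1.1 hs.1.le, hs.2.le⟩, by
          simp only [mem_preimage, mem_Iic, h0, abs_zero]; linarith⟩
        exact absurd (le_csSup hSbdd hsS) (not_le.mpr hs.1)
      have ht₁0 : 0 ≤ t₁ := le_trans ht₀.1.le ht₁S.1.1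
      exact ⟨t₁, ⟨ht₁0, le_trans ht₁lt.le htsK.2⟩, ht₁lam,
        key t₁ ts ht₁0 ht₁lt htsK.2 hnz⟩
    · -- ts < t₀
      set S := Icc ts t₀ ∩ (fun s => |u' s|) ⁻¹' Iic lam with hSdef
      have hSsubK : Icc ts t₀ ⊆ Icc 0 T := Icc_subset_Icc htsK.1 ht₀.2.le
      have hSne : S.Nonempty := ⟨t₀, ⟨hgt.le, le_refl _⟩, by
        simp only [mem_preimage, mem_Iic, hu't₀, abs_zero]; linarith⟩
      have hSbdd : BddBelow S := ⟨ts, fun x hx => hx.1.1⟩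
      have hSclosed : IsClosed S :=
        ContinuousOn.preimage_isClosed_of_isClosed (hu'abs.mono hSsubK) isClosed_Icc isClosed_Iic
      set t₁ := sInf S with ht₁def
      have ht₁S : t₁ ∈ S := hSclosed.csInf_mem hSne hSbdd
      have ht₁lam : |u' t₁| ≤ lam := ht₁S.2
      have ht₁gt : ts < t₁ := lt_of_le_of_ne ht₁S.1.1 (by
        intro he
        rw [← he] at ht₁lam
        linarith)
      have hnz : ∀ s ∈ Ioo ts t₁, u' s ≠ 0 := by
        intro s hs h0
        have hsS : s ∈ S := ⟨⟨hs.1.le, le_trans hs.2.le ht₁S.1.2⟩, by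
          simp only [mem_preimage, mem_Iic, h0, abs_zero]; linarith⟩
        exact absurd (csInf_le hSbdd hsS) (not_le.mpr hs.2)
      have ht₁T : t₁ ≤ T := le_trans ht₁S.1.2 ht₀.2.le
      refine ⟨t₁, ⟨le_trans htsK.1 ht₁gt.le, ht₁T⟩, ht₁lam, ?_⟩
      rw [abs_sub_comm]
      exact key ts t₁ htsK.1 ht₁gt ht₁T hnz
  -- final arithmetic
  have habs : ∀ q x : ℝ, x ≠ 0 → |phi q x| = |x| ^ (q - 1) := by
    intro q x hx
    rw [phi, abs_mul, abs_of_nonneg (Real.rpow_nonneg (abs_nonneg x) _),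
      show q - 1 = q - 2 + 1 by ring, Real.rpow_add_one (abs_ne_zero.mpr hx)]
  have hts0 : u' ts ≠ 0 := by
    intro h
    rw [h] at hlamlt
    simp at hlamlt
    linarith
  have hlow : M₂ ^ (pm - 1) ≤ |phi (p ts) (u' ts)| := by
    rw [habs _ _ hts0]
    calc M₂ ^ (pm - 1) ≤ |u' ts| ^ (pm - 1) :=
          Real.rpow_le_rpow (by linarith) hcon (by linarith)
      _ ≤ |u' ts| ^ (p ts - 1) :=
          Real.rpow_le_rpow_of_exponent_le (by linarith) (by linarith [hpmle ts htsK])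
  have hupper : |phi (p t₁) (u' t₁)| ≤ lam ^ (pp - 1) := by
    by_cases h0 : u' t₁ = 0
    · rw [phi, h0, mul_zero, abs_zero]
      exact Real.rpow_nonneg (by linarith) _
    · rw [habs _ _ h0]
      calc |u' t₁| ^ (p t₁ - 1) ≤ lam ^ (p t₁ - 1) :=
            Real.rpow_le_rpow (abs_nonneg _) ht₁lam (by linarith [hp1 t₁ ht₁K])
        _ ≤ lam ^ (pp - 1) :=
            Real.rpow_le_rpow_of_exponent_le hlam1 (by linarith [hplepp t₁ ht₁K])
  have htri := abs_sub_abs_le_abs_sub (phi (p ts) (u' ts)) (phi (p t₁) (u' t₁))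
  linarith
end
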